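/- For arbitrary path-connected Hausdorff spaces X and Y, cat(X × Y) ≤ cat(X) + cat(Y). -/

import Mathlib

open Set unitInterval Topology

/-- A point `x` of a topological space `X` is a *wild point* of `X` if every neighborhood `U`
of `x` contains a loop that is not null-homotopic in `X`. -/
def IsWildPoint {X : Type*} [TopologicalSpace X] (x : X) : Prop :=
  ∀ U ∈ 𝓝 x, ∃ (y : X) (γ : Path y y), Set.range ⇑γ ⊆ U ∧ ¬ γ.Homotopic (Path.refl y)

/-- The set of wild points of `X`. -/
def wildSet (X : Type*) [TopologicalSpace X] : Set X := {x | IsWildPoint x}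

/-- Iterated wild sets: `iterWild X 0 = X` and `iterWild X (n+1) = w(iterWild X n)`,
where the wild set of the subspace is taken with the subspace topology. -/
def iterWild (X : Type*) [TopologicalSpace X] : ℕ → Set X
  | 0 => Set.univ
  | n + 1 => Subtype.val '' wildSet ↥(iterWild X n)

/-- The wildness rank of `X`: the least `n` with `iterWild X n = ∅`, and `⊤` if none exists. -/
noncomputable def wildRank (X : Type*) [TopologicalSpace X] : ℕ∞ :=
  sInf ((↑) '' {n : ℕ | iterWild X n = ∅})

/-- `X` is `w`-stable if every iterated wild set is locally path-connected. -/
def WStable (X : Type*) [TopologicalSpace X] : Prop :=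
  ∀ n : ℕ, LocPathConnectedSpace ↥(iterWild X n)

/-- `X` has Lebesgue covering dimension at most one: every open cover admits an open
refinement which covers `X` and in which every point lies in at most two members. -/
def DimLEOne (X : Type*) [TopologicalSpace X] : Prop :=
  ∀ 𝒰 : Set (Set X), (∀ U ∈ 𝒰, IsOpen U) → ⋃₀ 𝒰 = Set.univ →
    ∃ 𝒱 : Set (Set X), (∀ V ∈ 𝒱, IsOpen V) ∧ ⋃₀ 𝒱 = Set.univ ∧
      (∀ V ∈ 𝒱, ∃ U ∈ 𝒰, V ⊆ U) ∧
      ∀ x : X, ∃ V₁ V₂ : Set X, ∀ V ∈ 𝒱, x ∈ V → V = V₁ ∨ V = V₂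

/-- A subset `A ⊆ X` is categorical in `X` if the inclusion `A → X` is homotopic to a
constant map. -/
def IsCategorical (X : Type*) [TopologicalSpace X] (A : Set X) : Prop :=
  ∃ y : X, ContinuousMap.Homotopic
    (⟨Subtype.val, continuous_subtype_val⟩ : C(↥A, X)) (ContinuousMap.const ↥A y)

/-- `A ⊆ X × X` admits a motion plan in `X` if the two coordinate projections `A → X`
are homotopic. -/
def AdmitsMotionPlan (X : Type*) [TopologicalSpace X] (A : Set (X × X)) : Prop :=
  ContinuousMap.Homotopic
    (⟨fun p : A => (p : X × X).1, continuous_fst.comp continuous_subtype_val⟩ : C(↥A, X))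
    (⟨fun p : A => (p : X × X).2, continuous_snd.comp continuous_subtype_val⟩ : C(↥A, X))

/-- The normalized Lusternik–Schnirelmann category of `X`, defined via closed filtrations
`∅ = F₋₁ ⊆ F 0 ⊆ ⋯ ⊆ F n = X` with categorical differences. -/
noncomputable def LSCat (X : Type*) [TopologicalSpace X] : ℕ∞ :=
  sInf ((↑) '' {n : ℕ | ∃ F : ℕ → Set X, Monotone F ∧ (∀ j, IsClosed (F j)) ∧
    F n = Set.univ ∧ IsCategorical X (F 0) ∧ ∀ j < n, IsCategorical X (F (j + 1) \ F j)})

/-- The normalized topological complexity of `X`, defined via closed filtrations of `X × X`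
whose differences admit motion plans. -/
noncomputable def TopComplexity (X : Type*) [TopologicalSpace X] : ℕ∞ :=
  sInf ((↑) '' {n : ℕ | ∃ F : ℕ → Set (X × X), Monotone F ∧ (∀ j, IsClosed (F j)) ∧
    F n = Set.univ ∧ AdmitsMotionPlan X (F 0) ∧ ∀ j < n, AdmitsMotionPlan X (F (j + 1) \ F j)})

/-- The relative LS-category `cat_X(A)` defined via filtrations of `A` by subsets closed in `A`
whose differences are categorical in `X`. -/
noncomputable def relCat (X : Type*) [TopologicalSpace X] (A : Set X) : ℕ∞ :=
  sInf ((↑) '' {n : ℕ | ∃ F : ℕ → Set X, Monotone F ∧ (∀ j, F j ⊆ A) ∧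
    (∀ j, IsClosed ((Subtype.val ⁻¹' F j : Set ↥A))) ∧ F n = A ∧
    IsCategorical X (F 0) ∧ ∀ j < n, IsCategorical X (F (j + 1) \ F j)})

/-- A simple closed curve in `X` is a subspace homeomorphic to the circle. -/
def IsSimpleClosedCurve {X : Type*} [TopologicalSpace X] (S : Set X) : Prop :=
  Nonempty (↥S ≃ₜ Circle)

/-- A continuous map is `π₁`-injective if every based loop whose image is null-homotopic is
itself null-homotopic (equivalently, the induced homomorphism on fundamental groups is
injective at every basepoint). -/
def Pi1Injective {X Y : Type*} [TopologicalSpace X] [TopologicalSpace Y] (f : C(X, Y)) : Prop :=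
  ∀ (x : X) (γ : Path x x), (γ.map f.continuous).Homotopic (Path.refl (f x)) →
    γ.Homotopic (Path.refl x)

def IsCategoricalTo (X : Type*) [TopologicalSpace X] (A : Set X) (y : X) : Prop :=
  ContinuousMap.Homotopic
    (⟨Subtype.val, continuous_subtype_val⟩ : C(↥A, X)) (ContinuousMap.const ↥A y)

lemma isCategoricalTo_empty {X : Type*} [TopologicalSpace X] (y : X) :
    IsCategoricalTo X ∅ y := by
  have h : (⟨Subtype.val, continuous_subtype_val⟩ : C(↥(∅ : Set X), X)) =
      ContinuousMap.const _ y := ContinuousMap.ext fun p => absurd p.2 (Set.notMem_empty _)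
  rw [IsCategoricalTo, h]

lemma isCategoricalTo_congr {X : Type*} [TopologicalSpace X] {A B : Set X} {y : X}
    (h : A = B) (hA : IsCategoricalTo X A y) : IsCategoricalTo X B y := h ▸ hA

lemma isCategoricalTo_of_isCategorical {X : Type*} [TopologicalSpace X] [PathConnectedSpace X]
    {A : Set X} (h : IsCategorical X A) (y' : X) : IsCategoricalTo X A y' := by
  obtain ⟨y, ⟨H⟩⟩ := h
  obtain γ := PathConnectedSpace.somePath y y'
  refine ContinuousMap.Homotopic.trans ⟨H⟩ ⟨?_⟩
  exact { toFun := fun q => γ q.1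
          continuous_toFun := γ.continuous.comp continuous_fst
          map_zero_left := fun x => by simp
          map_one_left := fun x => by simp }

lemma isCategoricalTo_prod {X Y : Type*} [TopologicalSpace X] [TopologicalSpace Y]
    {A : Set X} {B : Set Y} {x0 : X} {y0 : Y}
    (hA : IsCategoricalTo X A x0) (hB : IsCategoricalTo Y B y0) :
    IsCategoricalTo (X × Y) (A ×ˢ B) (x0, y0) := by
  obtain ⟨H⟩ := hA
  obtain ⟨K⟩ := hB
  refine ⟨?_⟩
  exact
    { toFun := fun q => (H (q.1, ⟨q.2.1.1, q.2.2.1⟩), K (q.1, ⟨q.2.1.2, q.2.2.2⟩))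
      continuous_toFun := by
        refine Continuous.prodMk (H.continuous.comp ?_) (K.continuous.comp ?_)
        · exact continuous_fst.prodMk
            (((continuous_subtype_val.comp continuous_snd).fst).subtype_mk _)
        · exact continuous_fst.prodMk
            (((continuous_subtype_val.comp continuous_snd).snd).subtype_mk _)
      map_zero_left := fun p => by simp
      map_one_left := fun p => by simp }

lemma isCategoricalTo_union {X : Type*} [TopologicalSpace X] {A B : Set X} {y0 : X}
    (hd : Disjoint A B)
    (hAc : IsClosed (Subtype.val ⁻¹' A : Set ↥(A ∪ B)))
    (hBc : IsClosed (Subtype.val ⁻¹' B : Set ↥(A ∪ B)))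
    (hA : IsCategoricalTo X A y0) (hB : IsCategoricalTo X B y0) :
    IsCategoricalTo X (A ∪ B) y0 := by
  classical
  obtain ⟨H⟩ := hA
  obtain ⟨K⟩ := hB
  have hcompl : (Subtype.val ⁻¹' A : Set ↥(A ∪ B))ᶜ = (Subtype.val ⁻¹' B : Set ↥(A ∪ B)) := by
    ext p
    simp only [mem_compl_iff, mem_preimage]
    constructor
    · intro h; exact p.2.resolve_left h
    · intro h hA'; exact hd.ne_of_mem hA' h rfl
  set f : I × ↥(A ∪ B) → X := fun q =>
    if h : (q.2 : X) ∈ A then H (q.1, ⟨q.2, h⟩) else K (q.1, ⟨q.2, q.2.2.resolve_left h⟩) with hf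
  have hs_closed : IsClosed (Prod.snd ⁻¹' (Subtype.val ⁻¹' A) : Set (I × ↥(A ∪ B))) :=
    hAc.preimage continuous_snd
  have hs_open : IsOpen (Prod.snd ⁻¹' (Subtype.val ⁻¹' A) : Set (I × ↥(A ∪ B))) := by
    rw [← isClosed_compl_iff]
    have : (Prod.snd ⁻¹' (Subtype.val ⁻¹' A) : Set (I × ↥(A ∪ B)))ᶜ =
        Prod.snd ⁻¹' (Subtype.val ⁻¹' B) := by rw [← hcompl]; rfl
    rw [this]
    exact hBc.preimage continuous_snd
  have hcont : Continuous f := by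
    set s : Set (I × ↥(A ∪ B)) := Prod.snd ⁻¹' (Subtype.val ⁻¹' A) with hsdef
    have honA : ContinuousOn f s := by
      rw [continuousOn_iff_continuous_restrict]
      have : s.domRestrict f = fun q : s => H (q.1.1, ⟨(q.1.2 : X), q.2⟩) :=
        funext fun q => dif_pos (show ((q.1.2 : ↥(A ∪ B)) : X) ∈ A from q.2)
      rw [this]
      have c1 : Continuous (fun q : ↥s => (q : I × ↥(A ∪ B))) := continuous_subtype_val
      exact H.continuous.comp (c1.fst.prodMk ((c1.snd.subtype_val).subtype_mk _))
    have honB : ContinuousOn f sᶜ := by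
      rw [continuousOn_iff_continuous_restrict]
      have : sᶜ.domRestrict f = fun q : ↥sᶜ =>
          K (q.1.1, ⟨(q.1.2 : X), q.1.2.2.resolve_left q.2⟩) :=
        funext fun q => dif_neg (show ¬ ((q.1.2 : ↥(A ∪ B)) : X) ∈ A from q.2)
      rw [this]
      have c1 : Continuous (fun q : ↥sᶜ => (q : I × ↥(A ∪ B))) := continuous_subtype_val
      exact K.continuous.comp (c1.fst.prodMk ((c1.snd.subtype_val).subtype_mk _))
    rw [continuous_iff_continuousAt]
    intro q
    by_cases hq : q ∈ s
    · exact honA.continuousAt (hs_open.mem_nhds hq)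
    · exact honB.continuousAt ((hs_closed.isOpen_compl).mem_nhds hq)
  refine ⟨?_⟩
  exact
    { toFun := f
      continuous_toFun := hcont
      map_zero_left := fun p => by
        by_cases h : (p : X) ∈ A
        · simp only [hf, dif_pos h]
          simpa using H.apply_zero ⟨(p : X), h⟩
        · simp only [hf, dif_neg h]
          simpa using K.apply_zero ⟨(p : X), p.2.resolve_left h⟩
      map_one_left := fun p => by
        by_cases h : (p : X) ∈ A
        · simp only [hf, dif_pos h]
          simpa using H.apply_one ⟨(p : X), h⟩
        · simp only [hf, dif_neg h]
          simpa using K.apply_one ⟨(p : X), p.2.resolve_left h⟩ }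


lemma isCategoricalTo_biUnion {X : Type*} [TopologicalSpace X] {y0 : X} (N : ℕ)
    (P C : ℕ → Set X)
    (hcat : ∀ i < N, IsCategoricalTo X (P i) y0)
    (hCc : ∀ i < N, IsClosed (C i))
    (hPC : ∀ i < N, P i = (⋃ j, ⋃ _ : j < N, P j) ∩ C i)
    (hdisj : ∀ i < N, ∀ j < N, i ≠ j → Disjoint (P i) (P j)) :
    IsCategoricalTo X (⋃ j, ⋃ _ : j < N, P j) y0 := by
  suffices h : ∀ t, t ≤ N → IsCategoricalTo X (⋃ j, ⋃ _ : j < t, P j) y0 from h N le_rfl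
  intro t
  induction t with
  | zero =>
    intro _
    refine isCategoricalTo_congr ?_ (isCategoricalTo_empty y0)
    simp
  | succ t ih =>
    intro ht
    have ht' : t ≤ N := Nat.le_of_succ_le ht
    have htN : t < N := ht
    have hUsub : ∀ u, u ≤ N → (⋃ j, ⋃ _ : j < u, P j) ⊆ (⋃ j, ⋃ _ : j < N, P j) := by
      intro u hu x hx
      obtain ⟨j, hj, hxj⟩ := Set.mem_iUnion₂.mp hx
      exact Set.mem_iUnion₂.mpr ⟨j, by omega, hxj⟩
    have hsplit : (⋃ j, ⋃ _ : j < t + 1, P j) = (⋃ j, ⋃ _ : j < t, P j) ∪ P t := by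
      ext x
      simp only [Set.mem_iUnion, Set.mem_union]
      constructor
      · rintro ⟨j, hj, hx⟩
        rcases Nat.lt_succ_iff_lt_or_eq.mp hj with h | h
        · exact Or.inl ⟨j, h, hx⟩
        · exact Or.inr (h ▸ hx)
      · rintro (⟨j, hj, hx⟩ | hx)
        · exact ⟨j, hj.trans (Nat.lt_succ_self t), hx⟩
        · exact ⟨t, Nat.lt_succ_self t, hx⟩
    rw [hsplit]
    set A := (⋃ j, ⋃ _ : j < t, P j) with hAdef
    set B := P t with hBdef
    have hABsub : A ∪ B ⊆ (⋃ j, ⋃ _ : j < N, P j) := by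
      rw [← hsplit]; exact hUsub (t+1) ht
    have hdAB : Disjoint A B := by
      rw [hAdef, Set.disjoint_iUnion₂_left]
      intro j hj
      exact hdisj j (hj.trans htN) t htN hj.ne
    have hBrel : B = (A ∪ B) ∩ C t := by
      apply subset_antisymm
      · intro x hx
        exact ⟨Or.inr hx, ((hPC t htN).le hx).2⟩
      · intro x hx
        exact (hPC t htN).ge ⟨hABsub hx.1, hx.2⟩
    have hArel : A = (A ∪ B) ∩ (⋃ j, ⋃ _ : j < t, C j) := by
      apply subset_antisymm
      · intro x hx
        refine ⟨Or.inl hx, ?_⟩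
        obtain ⟨j, hj, hxj⟩ := Set.mem_iUnion₂.mp hx
        exact Set.mem_iUnion₂.mpr ⟨j, hj, ((hPC j (hj.trans htN)).le hxj).2⟩
      · intro x hx
        obtain ⟨j, hj, hxj⟩ := Set.mem_iUnion₂.mp hx.2
        have : x ∈ P j := (hPC j (hj.trans htN)).ge ⟨hABsub hx.1, hxj⟩
        exact Set.mem_iUnion₂.mpr ⟨j, hj, this⟩
    refine isCategoricalTo_union hdAB ?_ ?_ (ih ht') (hcat t htN)
    · have he : (Subtype.val ⁻¹' A : Set ↥(A ∪ B)) =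
          Subtype.val ⁻¹' (⋃ j, ⋃ _ : j < t, C j) := by
        ext p
        simp only [Set.mem_preimage]
        exact ⟨fun h => (hArel.le h).2, fun h => hArel.ge ⟨p.2, h⟩⟩
      rw [he]
      exact (Set.Finite.isClosed_biUnion (Set.finite_Iio t)
        (fun j hj => hCc j (lt_of_lt_of_le hj ht'))).preimage continuous_subtype_val
    · have he : (Subtype.val ⁻¹' B : Set ↥(A ∪ B)) = Subtype.val ⁻¹' (C t) := by
        ext p
        simp only [Set.mem_preimage]
        exact ⟨fun h => (hBrel.le h).2, fun h => hBrel.ge ⟨p.2, h⟩⟩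
      rw [he]
      exact (hCc t htN).preimage continuous_subtype_val

lemma isCategoricalTo_diffs {X : Type*} [TopologicalSpace X] [PathConnectedSpace X]
    {F : ℕ → Set X} {n : ℕ} (hmono : Monotone F) (huniv : F n = Set.univ)
    (h0 : IsCategorical X (F 0)) (hd : ∀ j < n, IsCategorical X (F (j + 1) \ F j)) (x0 : X) :
    ∀ i, IsCategoricalTo X (F i \ ⋃ j, ⋃ _ : j < i, F j) x0 := by
  have hbU : ∀ i : ℕ, (⋃ j, ⋃ _ : j < i + 1, F j) = F i := by
    intro i
    apply subset_antisymm
    · exact Set.iUnion₂_subset fun j hj => hmono (Nat.lt_succ_iff.mp hj)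
    · intro x hx
      exact Set.mem_iUnion₂.mpr ⟨i, Nat.lt_succ_self i, hx⟩
  intro i
  match i with
  | 0 =>
    have he : F 0 = F 0 \ ⋃ j, ⋃ _ : j < 0, F j := by simp
    exact isCategoricalTo_congr he (isCategoricalTo_of_isCategorical h0 x0)
  | (i + 1) =>
    have he : F (i + 1) \ F i = F (i + 1) \ ⋃ j, ⋃ _ : j < i + 1, F j := by rw [hbU i]
    by_cases hi : i < n
    · exact isCategoricalTo_congr he (isCategoricalTo_of_isCategorical (hd i hi) x0)
    · have hFi : F i = Set.univ :=
        Set.eq_univ_of_univ_subset (huniv ▸ hmono (Nat.le_of_not_lt hi))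
      have he2 : (∅ : Set X) = F (i + 1) \ ⋃ j, ⋃ _ : j < i + 1, F j := by
        rw [hbU i, hFi]; simp
      exact isCategoricalTo_congr he2 (isCategoricalTo_empty x0)


/-- Product inequality for the LS-category: `cat(X × Y) ≤ cat(X) + cat(Y)`. -/
theorem lscat_prod_le (X Y : Type*) [TopologicalSpace X] [TopologicalSpace Y]
    [T2Space X] [T2Space Y] [PathConnectedSpace X] [PathConnectedSpace Y] :
    LSCat (X × Y) ≤ LSCat X + LSCat Y := by
  classical
  obtain ⟨x0⟩ : Nonempty X := inferInstance
  obtain ⟨y0⟩ : Nonempty Y := inferInstance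
  set SX := {n : ℕ | ∃ F : ℕ → Set X, Monotone F ∧ (∀ j, IsClosed (F j)) ∧
    F n = Set.univ ∧ IsCategorical X (F 0) ∧ ∀ j < n, IsCategorical X (F (j + 1) \ F j)} with hSX
  set SY := {m : ℕ | ∃ G : ℕ → Set Y, Monotone G ∧ (∀ j, IsClosed (G j)) ∧
    G m = Set.univ ∧ IsCategorical Y (G 0) ∧ ∀ j < m, IsCategorical Y (G (j + 1) \ G j)} with hSY
  by_cases hX : SX.Nonempty
  swap
  · have : LSCat X = ⊤ := by
      rw [LSCat, ← hSX, Set.not_nonempty_iff_eq_empty.mp hX]; simp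
    rw [this, top_add]; exact le_top
  by_cases hY : SY.Nonempty
  swap
  · have : LSCat Y = ⊤ := by
      rw [LSCat, ← hSY, Set.not_nonempty_iff_eq_empty.mp hY]; simp
    rw [this, add_top]; exact le_top
  set n := sInf SX with hn
  set m := sInf SY with hm
  obtain ⟨F, hFmono, hFcl, hFuniv, hF0, hFd⟩ := Nat.sInf_mem hX
  obtain ⟨G, hGmono, hGcl, hGuniv, hG0, hGd⟩ := Nat.sInf_mem hY
  have hcastX : (↑n : ℕ∞) ≤ LSCat X := by
    rw [LSCat, ← hSX]
    refine le_sInf ?_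
    rintro b ⟨k, hk, rfl⟩
    exact_mod_cast Nat.sInf_le hk
  have hcastY : (↑m : ℕ∞) ≤ LSCat Y := by
    rw [LSCat, ← hSY]
    refine le_sInf ?_
    rintro b ⟨k, hk, rfl⟩
    exact_mod_cast Nat.sInf_le hk
  have key : LSCat (X × Y) ≤ ((n + m : ℕ) : ℕ∞) := by
    -- the product filtration
    set H : ℕ → Set (X × Y) := fun k => ⋃ j, ⋃ _ : j < k + 1, (F j) ×ˢ (G (k - j)) with hH
    set DX : ℕ → Set X := fun i => F i \ ⋃ j, ⋃ _ : j < i, F j with hDX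
    set DY : ℕ → Set Y := fun i => G i \ ⋃ j, ⋃ _ : j < i, G j with hDY
    have hDXcat : ∀ i, IsCategoricalTo X (DX i) x0 :=
      isCategoricalTo_diffs hFmono hFuniv hF0 hFd x0
    have hDYcat : ∀ i, IsCategoricalTo Y (DY i) y0 :=
      isCategoricalTo_diffs hGmono hGuniv hG0 hGd y0
    have hHmono : Monotone H := by
      apply monotone_nat_of_le_succ
      intro k p hp
      obtain ⟨j, hj, hpj⟩ := Set.mem_iUnion₂.mp hp
      exact Set.mem_iUnion₂.mpr ⟨j, by omega, ⟨hpj.1, hGmono (by omega) hpj.2⟩⟩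
    have hHcl : ∀ k, IsClosed (H k) := fun k =>
      Set.Finite.isClosed_biUnion (Set.finite_Iio (k + 1))
        (fun j _ => (hFcl j).prod (hGcl (k - j)))
    have hHuniv : H (n + m) = Set.univ := by
      apply Set.eq_univ_of_forall
      intro p
      refine Set.mem_iUnion₂.mpr ⟨n, by omega, ⟨?_, ?_⟩⟩
      · rw [hFuniv]; trivial
      · have : n + m - n = m := by omega
        rw [this, hGuniv]; trivial
    have hH0 : IsCategorical (X × Y) (H 0) := by
      have he : DX 0 ×ˢ DY 0 = H 0 := by
        rw [hH]
        ext p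
        simp only [Set.mem_iUnion₂, Set.mem_iUnion]
        constructor
        · intro hp
          exact ⟨0, Nat.lt_succ_self 0, ⟨hp.1.1, hp.2.1⟩⟩
        · rintro ⟨j, hj, hpj⟩
          have hj0 : j = 0 := by omega
          subst hj0
          refine ⟨⟨hpj.1, by simp⟩, ⟨hpj.2, by simp⟩⟩
      exact ⟨(x0, y0), isCategoricalTo_congr he (isCategoricalTo_prod (hDXcat 0) (hDYcat 0))⟩
    have hHd : ∀ k, k < n + m → IsCategorical (X × Y) (H (k + 1) \ H k) := by
      intro k _
      set P : ℕ → Set (X × Y) := fun i => (DX i) ×ˢ (DY (k + 1 - i)) with hP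
      set C : ℕ → Set (X × Y) := fun i => (F i) ×ˢ (G (k + 1 - i)) with hC
      have hPsub : ∀ i, i < k + 2 → P i ⊆ H (k + 1) \ H k := by
        intro i hik p hp
        constructor
        · exact Set.mem_iUnion₂.mpr ⟨i, by omega, ⟨hp.1.1, hp.2.1⟩⟩
        · intro hmem
          obtain ⟨j, hj, hpj⟩ := Set.mem_iUnion₂.mp hmem
          have hij : i ≤ j := by
            by_contra hlt
            exact hp.1.2 (Set.mem_iUnion₂.mpr ⟨j, by omega, hpj.1⟩)
          exact hp.2.2 (Set.mem_iUnion₂.mpr ⟨k - j, by omega, hpj.2⟩)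
      have key1 : (⋃ i, ⋃ _ : i < k + 2, P i) = H (k + 1) \ H k := by
        apply subset_antisymm
        · intro p hp
          obtain ⟨i, hik, hpi⟩ := Set.mem_iUnion₂.mp hp
          exact hPsub i hik hpi
        · intro p hp
          obtain ⟨j, hjk, hpj⟩ := Set.mem_iUnion₂.mp hp.1
          have hex : ∃ i, p.1 ∈ F i := ⟨j, hpj.1⟩
          set i := Nat.find hex with hi
          have hile : i ≤ j := Nat.find_min' hex hpj.1
          have hp1 : p.1 ∈ F i := Nat.find_spec hex
          refine Set.mem_iUnion₂.mpr ⟨i, by omega, ⟨⟨hp1, ?_⟩, ⟨?_, ?_⟩⟩⟩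
          · intro hmem
            obtain ⟨j', hj', hpj'⟩ := Set.mem_iUnion₂.mp hmem
            exact Nat.find_min hex hj' hpj'
          · exact hGmono (by omega) hpj.2
          · intro hmem
            obtain ⟨j', hj', hpj'⟩ := Set.mem_iUnion₂.mp hmem
            refine hp.2 (Set.mem_iUnion₂.mpr ⟨i, by omega, ⟨hp1, hGmono (show j' ≤ k - i by omega) hpj'⟩⟩)
      have key2 : ∀ i, i < k + 2 → P i = (⋃ i', ⋃ _ : i' < k + 2, P i') ∩ C i := by
        intro i hik
        rw [key1]
        apply subset_antisymm
        · intro p hp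
          exact ⟨hPsub i hik hp, ⟨hp.1.1, hp.2.1⟩⟩
        · intro p hp
          obtain ⟨⟨hp1, hp2⟩, hpC⟩ := hp
          refine ⟨⟨hpC.1, ?_⟩, ⟨hpC.2, ?_⟩⟩
          · intro hmem
            obtain ⟨j', hj', hpj'⟩ := Set.mem_iUnion₂.mp hmem
            refine hp2 (Set.mem_iUnion₂.mpr ⟨j', by omega,
              ⟨hpj', hGmono (show k + 1 - i ≤ k - j' by omega) hpC.2⟩⟩)
          · intro hmem
            obtain ⟨j', hj', hpj'⟩ := Set.mem_iUnion₂.mp hmem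
            refine hp2 (Set.mem_iUnion₂.mpr ⟨i, by omega,
              ⟨hpC.1, hGmono (show j' ≤ k - i by omega) hpj'⟩⟩)
      have hdisj : ∀ i, i < k + 2 → ∀ j, j < k + 2 → i ≠ j → Disjoint (P i) (P j) := by
        intro i _ j _ hij
        rw [Set.disjoint_left]
        intro p hpi hpj
        rcases lt_or_gt_of_ne hij with h | h
        · exact hpj.1.2 (Set.mem_iUnion₂.mpr ⟨i, h, hpi.1.1⟩)
        · exact hpi.1.2 (Set.mem_iUnion₂.mpr ⟨j, h, hpj.1.1⟩)
      refine ⟨(x0, y0), isCategoricalTo_congr key1 (isCategoricalTo_biUnion (k + 2) P C ?_ ?_ key2 hdisj)⟩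
      · intro i _
        exact isCategoricalTo_prod (hDXcat i) (hDYcat (k + 1 - i))
      · intro i _
        exact (hFcl i).prod (hGcl (k + 1 - i))
    rw [LSCat]
    exact sInf_le ⟨n + m, ⟨H, hHmono, hHcl, hHuniv, hH0, hHd⟩, rfl⟩
  calc LSCat (X × Y) ≤ ((n + m : ℕ) : ℕ∞) := key
    _ = (↑n + ↑m : ℕ∞) := by push_cast; rfl
    _ ≤ LSCat X + LSCat Y := add_le_add hcastX hcastY
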